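/- arXiv:1205.5306 — 9 statements merged into one kernel-verified Lean document; each statement's English description precedes it below -/
import Mathlib

section
/- The 3×3 matrix M with rows (1,1,1), (1,0,1), (0,1,1) has a psd factorization of size 2: explicitly, the psd 2×2 matrices A_1 = [[0.5,-0.5],[-0.5,1]], A_2 = [[0.5,0],[0,0]], A_3 = [[0,0],[0,1]] for rows and B_1 = [[2,0],[0,0]], B_2 = [[0,0],[0,1]], B_3 = [[2,1],[1,1]] for columns satisfy Tr(A_i B_j) = M_{ij}, each A_i and B_j is positive semidefinite, and rank M = 3. -/
noncomputable def stmt2M : Matrix (Fin 3) (Fin 3) ℝ := !![1,1,1; 1,0,1; 0,1,1]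

noncomputable def stmt2A : Fin 3 → Matrix (Fin 2) (Fin 2) ℝ :=
  ![!![0.5, -0.5; -0.5, 1], !![0.5, 0; 0, 0], !![0, 0; 0, 1]]

noncomputable def stmt2B : Fin 3 → Matrix (Fin 2) (Fin 2) ℝ :=
  ![!![2, 0; 0, 0], !![0, 0; 0, 1], !![2, 1; 1, 1]]

lemma psd2 (a b c : ℝ) (ha : 0 ≤ a) (hc : 0 ≤ c) (h : b ^ 2 ≤ a * c) :
    (!![a, b; b, c] : Matrix (Fin 2) (Fin 2) ℝ).PosSemidef := by
  refine Matrix.PosSemidef.of_dotProduct_mulVec_nonneg ?_ ?_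
  · ext i j
    fin_cases i <;> fin_cases j <;>
      simp [Matrix.conjTranspose, Matrix.vecHead, Matrix.vecTail]
  · intro x
    have : (0:ℝ) ≤ a * (x 0 * x 0) + 2 * b * (x 0 * x 1) + c * (x 1 * x 1) := by
      rcases eq_or_lt_of_le ha with ha' | ha'
      · have hb : b = 0 := by nlinarith
        subst hb
        nlinarith [mul_nonneg hc (sq_nonneg (x 1))]
      · have key : 0 ≤ (a * x 0 + b * x 1) ^ 2 + (a * c - b ^ 2) * (x 1) ^ 2 := by
          nlinarith [sq_nonneg (a * x 0 + b * x 1), mul_nonneg (sub_nonneg.2 h) (sq_nonneg (x 1))]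
        nlinarith [key, ha']
    simpa [Matrix.mulVec, dotProduct, Fin.sum_univ_two] using by
      nlinarith [this]

/-- the explicit psd factorization of size 2 of the given 3×3 matrix of rank 3. -/
theorem stmt2 :
    (∀ i, (stmt2A i).PosSemidef) ∧ (∀ j, (stmt2B j).PosSemidef) ∧
    (∀ i j, (stmt2A i * stmt2B j).trace = stmt2M i j) ∧
    stmt2M.rank = 3 := by
  refine ⟨?_, ?_, ?_, ?_⟩
  · intro i
    fin_cases i <;> simp only [stmt2A, Matrix.cons_val_zero, Matrix.cons_val_one, Matrix.head_cons] <;>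
      [exact psd2 0.5 (-0.5) 1 (by norm_num) (by norm_num) (by norm_num);
       exact psd2 0.5 0 0 (by norm_num) (by norm_num) (by norm_num);
       exact psd2 0 0 1 (by norm_num) (by norm_num) (by norm_num)]
  · intro j
    fin_cases j <;> simp only [stmt2B, Matrix.cons_val_zero, Matrix.cons_val_one, Matrix.head_cons] <;>
      [exact psd2 2 0 0 (by norm_num) (by norm_num) (by norm_num);
       exact psd2 0 0 1 (by norm_num) (by norm_num) (by norm_num);
       exact psd2 2 1 1 (by norm_num) (by norm_num) (by norm_num)]
  · intro i j
    fin_cases i <;> fin_cases j <;>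
      simp [stmt2A, stmt2B, stmt2M, Matrix.trace, Matrix.mul_apply, Fin.sum_univ_two,
        Fin.sum_univ_succ, Matrix.vecHead, Matrix.vecTail] <;> norm_num
  · have hdet : stmt2M.det = -1 := by
      simp [stmt2M, Matrix.det_fin_three, Matrix.vecHead, Matrix.vecTail]
    have hunit : IsUnit stmt2M := by
      rw [Matrix.isUnit_iff_isUnit_det, hdet]
      exact IsUnit.of_mul_eq_one (-1) (by norm_num)
    simpa using stmt2M.rank_of_isUnit hunit
end

section
/- The 3×3 derangement matrix M with M_{ij} = 0 if i = j and M_{ij} = 1 otherwise has rank 3, but has a Hadamard square root of rank 2 (for instance the matrix with rows (0,-1,1),(1,0,1),(1,1,0)). -/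
/-- The 3×3 derangement matrix. -/
def derangement3 : Matrix (Fin 3) (Fin 3) ℝ := !![0,1,1; 1,0,1; 1,1,0]

/-- An explicit Hadamard square root of the derangement matrix. -/
def derangementSqrt : Matrix (Fin 3) (Fin 3) ℝ := !![0,-1,1; 1,0,1; 1,1,0]

/-- the derangement matrix has rank 3 but a Hadamard square root of rank 2. -/
theorem stmt3 :
    derangement3.rank = 3 ∧
    (∀ i j, derangementSqrt i j ^ 2 = derangement3 i j) ∧
    derangementSqrt.rank = 2 := by
  refine ⟨?_, ?_, ?_⟩
  · have h : IsUnit derangement3 := by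
      rw [Matrix.isUnit_iff_isUnit_det]
      simp [derangement3, Matrix.det_fin_three, Matrix.vecHead, Matrix.vecTail]

    simpa using Matrix.rank_of_isUnit _ h
  · intro i j
    fin_cases i <;> fin_cases j <;> simp [derangement3, derangementSqrt, Matrix.vecHead, Matrix.vecTail] <;> norm_num
  · -- rank ≤ 2 : factor through a 3×2 times 2×3 product
    have hfac : derangementSqrt =
        (!![1,0;0,1;-1,1] : Matrix (Fin 3) (Fin 2) ℝ) * (!![0,-1,1;1,0,1] : Matrix (Fin 2) (Fin 3) ℝ) := by
      ext i j
      fin_cases i <;> fin_cases j <;>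
        simp [derangementSqrt, Matrix.mul_apply, Fin.sum_univ_succ, Matrix.vecHead, Matrix.vecTail] <;> norm_num
    have hle : derangementSqrt.rank ≤ 2 := by
      rw [hfac]
      calc ((!![1,0;0,1;-1,1] : Matrix (Fin 3) (Fin 2) ℝ) * (!![0,-1,1;1,0,1] : Matrix (Fin 2) (Fin 3) ℝ)).rank
          ≤ (!![0,-1,1;1,0,1] : Matrix (Fin 2) (Fin 3) ℝ).rank :=
            Matrix.rank_mul_le_right _ _
        _ ≤ 2 := by simpa using Matrix.rank_le_card_height (!![0,-1,1;1,0,1] : Matrix (Fin 2) (Fin 3) ℝ)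
    have hprod : (!![1,0,0;0,1,0] : Matrix (Fin 2) (Fin 3) ℝ) * derangementSqrt *
        (!![1,0;0,1;0,0] : Matrix (Fin 3) (Fin 2) ℝ) = !![0,-1;1,0] := by
      ext i j
      fin_cases i <;> fin_cases j <;>
        simp [derangementSqrt, Matrix.mul_apply, Fin.sum_univ_succ, Matrix.vecHead, Matrix.vecTail] <;> norm_num
    have hunit : IsUnit (!![0,-1;1,0] : Matrix (Fin 2) (Fin 2) ℝ) := by
      rw [Matrix.isUnit_iff_isUnit_det]
      simp [Matrix.det_fin_two]
    have hge : 2 ≤ derangementSqrt.rank := by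
      have h2 : (!![0,-1;1,0] : Matrix (Fin 2) (Fin 2) ℝ).rank = 2 := by
        simpa using Matrix.rank_of_isUnit _ hunit
      calc (2 : ℕ) = (!![0,-1;1,0] : Matrix (Fin 2) (Fin 2) ℝ).rank := h2.symm
        _ ≤ ((!![1,0,0;0,1,0] : Matrix (Fin 2) (Fin 3) ℝ) * derangementSqrt).rank := by
            rw [← hprod]; exact Matrix.rank_mul_le_left _ _
        _ ≤ derangementSqrt.rank := Matrix.rank_mul_le_right _ _
    omega
end

section
/- Let M ∈ ℝ^{p×q} be a nonnegative matrix whose psd rank is k, and let M' be the (p+1)×(q+1) matrix formed by appending a column of zeros to M and then a new bottom row (w, α) where w ∈ ℝ^q is nonnegative and α > 0. Then the psd rank of M' is exactly k+1. -/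
/-- `M` admits a psd factorization of size `k`. -/
def HasPsdFact {p q : ℕ} (M : Matrix (Fin p) (Fin q) ℝ) (k : ℕ) : Prop :=
  ∃ (A : Fin p → Matrix (Fin k) (Fin k) ℝ) (B : Fin q → Matrix (Fin k) (Fin k) ℝ),
    (∀ i, (A i).PosSemidef) ∧ (∀ j, (B j).PosSemidef) ∧
    ∀ i j, (A i * B j).trace = M i j


open Matrix

-- helper 1: psd fromBlocks
lemma psd_fromBlocks {m n : Type*} [Fintype m] [Fintype n]
    {X : Matrix m m ℝ} {Y : Matrix n n ℝ} (hX : X.PosSemidef) (hY : Y.PosSemidef) :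
    (Matrix.fromBlocks X 0 0 Y).PosSemidef := by
  rw [Matrix.posSemidef_iff_dotProduct_mulVec]
  constructor
  · unfold Matrix.IsHermitian
    rw [Matrix.fromBlocks_conjTranspose, hX.1, hY.1]
    simp
  · intro x
    rw [Matrix.fromBlocks_mulVec]
    have h : dotProduct (star x)
        (Sum.elim (X *ᵥ (x ∘ Sum.inl) + (0 : Matrix m n ℝ) *ᵥ (x ∘ Sum.inr))
          ((0 : Matrix n m ℝ) *ᵥ (x ∘ Sum.inl) + Y *ᵥ (x ∘ Sum.inr)))
        = dotProduct (star (x ∘ Sum.inl)) (X *ᵥ (x ∘ Sum.inl))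
          + dotProduct (star (x ∘ Sum.inr)) (Y *ᵥ (x ∘ Sum.inr)) := by
      simp [dotProduct, Fintype.sum_sum_type]
    rw [h]
    exact add_nonneg (hX.dotProduct_mulVec_nonneg _) (hY.dotProduct_mulVec_nonneg _)

-- helper 2: trace of AᴴA = 0 implies A = 0 (real)
lemma eq_zero_of_trace_conjTranspose_mul_self {m n : Type*} [Fintype m] [Fintype n]
    {A : Matrix m n ℝ} (h : (Aᴴ * A).trace = 0) : A = 0 := by
  have key : ∀ i j, A i j = 0 := by
    have h' : ∑ j, ∑ i, A i j * A i j = 0 := by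
      simpa [Matrix.trace, Matrix.mul_apply, Matrix.diag] using h
    have hnn : ∀ j ∈ Finset.univ, (0:ℝ) ≤ ∑ i, A i j * A i j :=
      fun j _ => Finset.sum_nonneg fun i _ => mul_self_nonneg _
    intro i j
    have hj := (Finset.sum_eq_zero_iff_of_nonneg hnn).1 h' j (Finset.mem_univ j)
    have hnn2 : ∀ i ∈ Finset.univ, (0:ℝ) ≤ A i j * A i j :=
      fun i _ => mul_self_nonneg _
    have := (Finset.sum_eq_zero_iff_of_nonneg hnn2).1 hj i (Finset.mem_univ i)
    exact mul_self_eq_zero.1 this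
  ext i j; exact key i j

-- helper 3: psd X, psd Y, Tr(XY)=0 → XY=0
open scoped MatrixOrder in
lemma psd_mul_eq_zero_of_trace_eq_zero {n : Type*} [Fintype n] [DecidableEq n]
    {X Y : Matrix n n ℝ} (hX : X.PosSemidef) (hY : Y.PosSemidef)
    (h : (X * Y).trace = 0) : X * Y = 0 := by
  set S := CFC.sqrt X with hSdef
  set T := CFC.sqrt Y with hTdef
  have hSS : S * S = X := CFC.sqrt_mul_sqrt_self X hX.nonneg
  have hTT : T * T = Y := CFC.sqrt_mul_sqrt_self Y hY.nonneg
  have hSh : Sᴴ = S := (CFC.sqrt_nonneg X).posSemidef.1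
  have hTh : Tᴴ = T := (CFC.sqrt_nonneg Y).posSemidef.1
  have htr : ((T * S)ᴴ * (T * S)).trace = 0 := by
    have : (T * S)ᴴ * (T * S) = S * (T * (T * S)) := by
      rw [Matrix.conjTranspose_mul, hSh, hTh, Matrix.mul_assoc]
    rw [this]
    have : (S * (T * (T * S))).trace = (X * Y).trace := by
      rw [← hSS, ← hTT, ← Matrix.mul_assoc, ← Matrix.mul_assoc, Matrix.trace_mul_comm]
      simp only [Matrix.mul_assoc]
    rw [this, h]
  have hTS : T * S = 0 := eq_zero_of_trace_conjTranspose_mul_self htr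
  have hST : S * T = 0 := by
    have := congrArg Matrix.conjTranspose hTS
    rwa [Matrix.conjTranspose_mul, hSh, hTh, Matrix.conjTranspose_zero] at this
  calc X * Y = S * (S * T) * T := by rw [← hSS, ← hTT]; noncomm_ring
    _ = 0 := by rw [hST, Matrix.mul_zero, Matrix.zero_mul]

lemma trace_submatrix_equiv' {m n : Type*} [Fintype m] [Fintype n] (e : m ≃ n)
    (X : Matrix n n ℝ) : (X.submatrix e e).trace = X.trace := by
  simp only [Matrix.trace, Matrix.diag, Matrix.submatrix_apply]
  exact e.sum_comp fun i => X i i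

lemma upper_bound {p q k : ℕ} (M : Matrix (Fin p) (Fin q) ℝ)
    (hfk : HasPsdFact M k)
    (w : Fin q → ℝ) (hw : ∀ j, 0 ≤ w j) (α : ℝ) (hα : 0 ≤ α)
    (M' : Matrix (Fin (p+1)) (Fin (q+1)) ℝ)
    (hM'₁ : ∀ (i : Fin p) (j : Fin q), M' i.castSucc j.castSucc = M i j)
    (hM'₂ : ∀ i : Fin p, M' i.castSucc (Fin.last q) = 0)
    (hM'₃ : ∀ j : Fin q, M' (Fin.last p) j.castSucc = w j)
    (hM'₄ : M' (Fin.last p) (Fin.last q) = α) :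
    HasPsdFact M' (k+1) := by
  obtain ⟨A, B, hA, hB, hAB⟩ := hfk
  set e : Fin k ⊕ Fin 1 ≃ Fin (k+1) := finSumFinEquiv
  set d1 : Matrix (Fin 1) (Fin 1) ℝ := Matrix.diagonal (fun _ => (1:ℝ)) with hd1
  refine ⟨Fin.lastCases (Matrix.reindex e e (Matrix.fromBlocks 0 0 0 d1))
      (fun i => Matrix.reindex e e (Matrix.fromBlocks (A i) 0 0 0)),
    Fin.lastCases (Matrix.reindex e e (Matrix.fromBlocks 0 0 0 (Matrix.diagonal (fun _ => α))))
      (fun j => Matrix.reindex e e (Matrix.fromBlocks (B j) 0 0 (Matrix.diagonal (fun _ => w j)))),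
    ?_, ?_, ?_⟩
  · intro i
    refine Fin.lastCases ?_ (fun i => ?_) i <;>
      simp only [Fin.lastCases_last, Fin.lastCases_castSucc, Matrix.reindex_apply]
    · exact (psd_fromBlocks .zero (Matrix.PosSemidef.diagonal (fun _ => zero_le_one))).submatrix _
    · exact (psd_fromBlocks (hA i) .zero).submatrix _
  · intro j
    refine Fin.lastCases ?_ (fun j => ?_) j <;>
      simp only [Fin.lastCases_last, Fin.lastCases_castSucc, Matrix.reindex_apply]
    · exact (psd_fromBlocks .zero (Matrix.PosSemidef.diagonal (fun _ => hα))).submatrix _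
    · exact (psd_fromBlocks (hB j) (Matrix.PosSemidef.diagonal (fun _ => hw j))).submatrix _
  · have key : ∀ (X₁ Y₁ : Matrix (Fin k) (Fin k) ℝ) (X₂ Y₂ : Matrix (Fin 1) (Fin 1) ℝ),
        ((Matrix.reindex e e (Matrix.fromBlocks X₁ 0 0 X₂)) *
          (Matrix.reindex e e (Matrix.fromBlocks Y₁ 0 0 Y₂))).trace
          = (X₁*Y₁).trace + (X₂*Y₂).trace := by
      intro X₁ Y₁ X₂ Y₂
      rw [Matrix.reindex_apply, Matrix.reindex_apply, Matrix.submatrix_mul_equiv,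
        Matrix.fromBlocks_multiply]
      simp only [Matrix.mul_zero, Matrix.zero_mul, add_zero, zero_add]
      rw [trace_submatrix_equiv']
      simp [Matrix.trace, Matrix.diag, Fintype.sum_sum_type]
    intro i j
    refine Fin.lastCases ?_ (fun i => ?_) i <;> refine Fin.lastCases ?_ (fun j => ?_) j <;>
      simp only [Fin.lastCases_last, Fin.lastCases_castSucc] <;> rw [key]
    · rw [hM'₄]; simp [hd1, Matrix.diagonal_mul_diagonal, Matrix.trace_diagonal]
    · rw [hM'₃]; simp [hd1, Matrix.diagonal_mul_diagonal, Matrix.trace_diagonal]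
    · rw [hM'₂]; simp
    · rw [hM'₁, hAB]; simp


lemma reduce {p q n : ℕ} (M : Matrix (Fin p) (Fin q) ℝ)
    (A : Fin p → Matrix (Fin (n+1)) (Fin (n+1)) ℝ) (hA : ∀ i, (A i).PosSemidef)
    (B : Fin q → Matrix (Fin (n+1)) (Fin (n+1)) ℝ) (hB : ∀ j, (B j).PosSemidef)
    (hAB : ∀ i j, (A i * B j).trace = M i j)
    (b : Matrix (Fin (n+1)) (Fin (n+1)) ℝ) (hb : b.PosSemidef) (hbne : b ≠ 0)
    (hzero : ∀ i, (A i * b).trace = 0) : HasPsdFact M n := by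
  have hAb : ∀ i, A i * b = 0 :=
    fun i => psd_mul_eq_zero_of_trace_eq_zero (hA i) hb (hzero i)
  have hu : ∃ u, b *ᵥ u ≠ 0 := by
    by_contra h
    push_neg at h
    apply hbne
    ext i j
    have h2 := congrFun (h (Pi.single j 1)) i
    simpa [Matrix.mulVec_single] using h2
  obtain ⟨u, hu⟩ := hu
  set v0 : Fin (n+1) → ℝ := b *ᵥ u with hv0def
  set S : ℝ := ∑ s, v0 s * v0 s with hSdef
  have hS : 0 < S := by
    obtain ⟨s0, hs0⟩ := Function.ne_iff.1 hu
    exact Finset.sum_pos' (fun s _ => mul_self_nonneg _)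
      ⟨s0, Finset.mem_univ s0, mul_self_pos.2 hs0⟩
  set c : ℝ := (Real.sqrt S)⁻¹ with hcdef
  set v : Fin (n+1) → ℝ := c • v0 with hvdef
  have hvv : ∑ s, v s * v s = 1 := by
    have : ∑ s, v s * v s = c * c * S := by
      rw [hSdef, Finset.mul_sum]
      refine Finset.sum_congr rfl fun s _ => ?_
      simp [hvdef]; ring
    rw [this, hcdef, ← mul_inv, Real.mul_self_sqrt hS.le, inv_mul_cancel₀ hS.ne']
  have hAv : ∀ i, A i *ᵥ v = 0 := by
    intro i
    rw [hvdef, Matrix.mulVec_smul, hv0def, Matrix.mulVec_mulVec, hAb i,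
      Matrix.zero_mulVec, smul_zero]
  set vE : EuclideanSpace ℝ (Fin (n+1)) := WithLp.toLp 2 v with hvEdef
  have hinner : (inner ℝ vE vE : ℝ) = 1 := by
    rw [PiLp.inner_apply]
    simpa [RCLike.inner_apply, starRingEnd_apply, hvEdef, pow_two] using hvv
  have hnorm : ‖vE‖ = 1 := by
    have h1 : ‖vE‖ * ‖vE‖ = 1 := by rw [← real_inner_self_eq_norm_mul_norm]; exact hinner
    nlinarith [norm_nonneg vE]
  have horth : Orthonormal ℝ (Set.restrict ({0} : Set (Fin (n+1)))
      (fun _ => vE : Fin (n+1) → EuclideanSpace ℝ (Fin (n+1)))) := by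
    constructor
    · intro i; exact hnorm
    · exact Subsingleton.pairwise
  obtain ⟨bb, hbb⟩ := horth.exists_orthonormalBasis_extension_of_card_eq (by simp)
  have hb0 : bb 0 = vE := hbb 0 rfl
  set U : Matrix (Fin (n+1)) (Fin (n+1)) ℝ := Matrix.of fun s t => bb t s with hUdef
  have hU : Uᴴ * U = 1 := by
    ext t t'
    rw [Matrix.mul_apply, Matrix.one_apply]
    have h3 := orthonormal_iff_ite.1 bb.orthonormal t t'
    rw [PiLp.inner_apply] at h3
    simpa [RCLike.inner_apply, starRingEnd_apply, hUdef, mul_comm] using h3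
  have hU2 : U * Uᴴ = 1 := mul_eq_one_comm.1 hU
  have hUcol : ∀ r, U r 0 = v r := by
    intro r
    show bb 0 r = v r
    rw [hb0]
  -- conjugated matrices
  have hpsdA : ∀ i, (Uᴴ * A i * U).PosSemidef := fun i => (hA i).conjTranspose_mul_mul_same U
  have hpsdB : ∀ j, (Uᴴ * B j * U).PosSemidef := fun j => (hB j).conjTranspose_mul_mul_same U
  have hcol : ∀ i s, (Uᴴ * A i * U) s 0 = 0 := by
    intro i s
    have h1 : ∀ t, (A i * U) t 0 = 0 := by
      intro t
      rw [Matrix.mul_apply]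
      have : ∀ r, A i t r * U r 0 = A i t r * v r := fun r => by rw [hUcol]
      rw [Finset.sum_congr rfl fun r _ => this r]
      exact congrFun (hAv i) t
    rw [Matrix.mul_assoc, Matrix.mul_apply]
    exact Finset.sum_eq_zero fun t _ => by rw [h1 t, mul_zero]
  have hrow : ∀ i t, (Uᴴ * A i * U) 0 t = 0 := by
    intro i t
    rw [← (hpsdA i).1.apply, hcol i t, star_zero]
  -- trace of submatrices
  have trace_eq : ∀ (X Y : Matrix (Fin (n+1)) (Fin (n+1)) ℝ),
      (∀ t, X 0 t = 0) → (∀ s, X s 0 = 0) →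
      ((X.submatrix Fin.succ Fin.succ) * (Y.submatrix Fin.succ Fin.succ)).trace
        = (X * Y).trace := by
    intro X Y hr hc
    simp only [Matrix.trace, Matrix.diag, Matrix.mul_apply, Matrix.submatrix_apply]
    symm
    rw [Fin.sum_univ_succ]
    have h0 : ∑ t, X 0 t * Y t 0 = 0 := by
      refine Finset.sum_eq_zero fun t _ => by rw [hr t, zero_mul]
    rw [h0, zero_add]
    refine Finset.sum_congr rfl fun s _ => ?_
    rw [Fin.sum_univ_succ, hc, zero_mul, zero_add]
  have conj_trace : ∀ (X Y : Matrix (Fin (n+1)) (Fin (n+1)) ℝ),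
      ((Uᴴ * X * U) * (Uᴴ * Y * U)).trace = (X * Y).trace := by
    intro X Y
    have : (Uᴴ * X * U) * (Uᴴ * Y * U) = Uᴴ * (X * Y) * U := by
      calc (Uᴴ * X * U) * (Uᴴ * Y * U) = Uᴴ * X * (U * Uᴴ) * Y * U := by
            simp only [Matrix.mul_assoc]
        _ = Uᴴ * (X * Y) * U := by rw [hU2, Matrix.mul_one]; simp only [Matrix.mul_assoc]
    rw [this, Matrix.trace_mul_comm, ← Matrix.mul_assoc, ← Matrix.mul_assoc, hU2,
      Matrix.one_mul]
  refine ⟨fun i => (Uᴴ * A i * U).submatrix Fin.succ Fin.succ,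
    fun j => (Uᴴ * B j * U).submatrix Fin.succ Fin.succ,
    fun i => (hpsdA i).submatrix _, fun j => (hpsdB j).submatrix _, ?_⟩
  intro i j
  rw [trace_eq _ _ (hrow i) (hcol i), conj_trace, hAB]

/-- appending a zero column and then a bottom row `(w, α)` with `w ≥ 0`,
`α > 0` to a nonnegative matrix of psd rank `k` yields a matrix of psd rank exactly `k+1`. -/
theorem stmt4 (p q k : ℕ) (M : Matrix (Fin p) (Fin q) ℝ)
    (hM : ∀ i j, 0 ≤ M i j)
    (hk : IsLeast {k' | HasPsdFact M k'} k)
    (w : Fin q → ℝ) (hw : ∀ j, 0 ≤ w j) (α : ℝ) (hα : 0 < α)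
    (M' : Matrix (Fin (p+1)) (Fin (q+1)) ℝ)
    (hM'₁ : ∀ (i : Fin p) (j : Fin q), M' i.castSucc j.castSucc = M i j)
    (hM'₂ : ∀ i : Fin p, M' i.castSucc (Fin.last q) = 0)
    (hM'₃ : ∀ j : Fin q, M' (Fin.last p) j.castSucc = w j)
    (hM'₄ : M' (Fin.last p) (Fin.last q) = α) :
    IsLeast {k' | HasPsdFact M' k'} (k + 1) := by
  constructor
  · exact upper_bound M hk.1 w hw α hα.le M' hM'₁ hM'₂ hM'₃ hM'₄
  · rintro m hm
    match m, hm with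
    | 0, hm =>
      exfalso
      obtain ⟨A, B, _, _, hAB⟩ := hm
      have h1 := hAB (Fin.last p) (Fin.last q)
      rw [hM'₄, Matrix.trace_fin_zero] at h1
      exact hα.ne h1
    | n+1, hm =>
      obtain ⟨A, B, hA, hB, hAB⟩ := hm
      have hbne : B (Fin.last q) ≠ 0 := by
        intro h0
        have h1 := hAB (Fin.last p) (Fin.last q)
        rw [hM'₄, h0, Matrix.mul_zero, Matrix.trace_zero] at h1
        exact hα.ne h1
      have hfact : HasPsdFact M n :=
        reduce M (fun i => A i.castSucc) (fun i => hA _)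
          (fun j => B j.castSucc) (fun j => hB _)
          (fun i j => by rw [hAB, hM'₁])
          (B (Fin.last q)) (hB _) hbne
          (fun i => by rw [hAB, hM'₂])
      have := hk.2 hfact
      omega
end

section
/- Let M' be a nonnegative matrix of the block form (M 0; w α) with α > 0, where M has psd rank k. In any psd factorization of M' of size k+1, the psd factor B associated to the last column of M' has rank exactly one. -/
open Matrix

lemma aux_trace_mul_conjT_eq_zero {n m : ℕ} {M : Matrix (Fin n) (Fin m) ℝ}
    (h : (M * Mᴴ).trace = 0) : M = 0 := by
  have h' : ∑ i, ∑ j, M i j * M i j = 0 := by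
    simpa [Matrix.trace, Matrix.mul_apply, Matrix.diag] using h
  ext i j
  have h1 := (Finset.sum_eq_zero_iff_of_nonneg (fun i _ =>
    Finset.sum_nonneg (fun j _ => mul_self_nonneg (M i j)))).mp h' i (Finset.mem_univ i)
  have h2 := (Finset.sum_eq_zero_iff_of_nonneg (fun j _ =>
    mul_self_nonneg (M i j))).mp h1 j (Finset.mem_univ j)
  simpa [mul_self_eq_zero] using h2

lemma aux_psd_mul_eq_zero {n : ℕ} {X Y : Matrix (Fin n) (Fin n) ℝ}
    (hX : X.PosSemidef) (hY : Y.PosSemidef) (h : (X * Y).trace = 0) : X * Y = 0 := by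
  obtain ⟨S, rfl⟩ : ∃ S : Matrix (Fin n) (Fin n) ℝ, _ = Sᴴ * S := by
    open scoped MatrixOrder in exact CStarAlgebra.nonneg_iff_eq_star_mul_self.mp hX.nonneg
  obtain ⟨T, rfl⟩ : ∃ T : Matrix (Fin n) (Fin n) ℝ, _ = Tᴴ * T := by
    open scoped MatrixOrder in exact CStarAlgebra.nonneg_iff_eq_star_mul_self.mp hY.nonneg
  have key : T * Sᴴ = 0 := by
    apply aux_trace_mul_conjT_eq_zero
    have e1 : ((T * Sᴴ) * (T * Sᴴ)ᴴ).trace = (Sᴴ * S * (Tᴴ * T)).trace := by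
      rw [Matrix.conjTranspose_mul, Matrix.conjTranspose_conjTranspose,
        show T * Sᴴ * (S * Tᴴ) = T * (Sᴴ * (S * Tᴴ)) by simp [Matrix.mul_assoc],
        Matrix.trace_mul_comm]
      simp [Matrix.mul_assoc]
    rw [e1, h]
  have e2 : Sᴴ * S * (Tᴴ * T) = Sᴴ * (T * Sᴴ)ᴴ * T := by
    simp [Matrix.conjTranspose_mul, Matrix.mul_assoc]
  rw [e2, key]
  simp

lemma aux_mul_vecMulVec {n : ℕ} (A : Matrix (Fin n) (Fin n) ℝ) (u w : Fin n → ℝ) :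
    A * vecMulVec u w = vecMulVec (A *ᵥ u) w := by
  ext x y
  simp [Matrix.mul_apply, Matrix.vecMulVec_apply, Matrix.mulVec, dotProduct,
    Finset.sum_mul, mul_assoc]

lemma aux_vecMulVec_zero {n : ℕ} (w : Fin n → ℝ) :
    vecMulVec (0 : Fin n → ℝ) w = 0 := by
  ext x y; simp [Matrix.vecMulVec_apply]

/-- if `M'` is the block matrix `(M 0; w α)` with `α > 0` and `M` has psd
rank `k`, then in any psd factorization of `M'` of size `k+1` the factor associated to
the last column has rank exactly one. -/
theorem stmt5 (p q k : ℕ) (M : Matrix (Fin p) (Fin q) ℝ)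
    (hM : ∀ i j, 0 ≤ M i j)
    (hk : IsLeast {k' | HasPsdFact M k'} k)
    (w : Fin q → ℝ) (hw : ∀ j, 0 ≤ w j) (α : ℝ) (hα : 0 < α)
    (M' : Matrix (Fin (p+1)) (Fin (q+1)) ℝ)
    (hM'₁ : ∀ (i : Fin p) (j : Fin q), M' i.castSucc j.castSucc = M i j)
    (hM'₂ : ∀ i : Fin p, M' i.castSucc (Fin.last q) = 0)
    (hM'₃ : ∀ j : Fin q, M' (Fin.last p) j.castSucc = w j)
    (hM'₄ : M' (Fin.last p) (Fin.last q) = α)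
    (A : Fin (p+1) → Matrix (Fin (k+1)) (Fin (k+1)) ℝ)
    (B : Fin (q+1) → Matrix (Fin (k+1)) (Fin (k+1)) ℝ)
    (hA : ∀ i, (A i).PosSemidef) (hB : ∀ j, (B j).PosSemidef)
    (hfact : ∀ i j, (A i * B j).trace = M' i j) :
    (B (Fin.last q)).rank = 1 := by
  classical
  set B0 := B (Fin.last q) with hB0def
  have hH : B0.IsHermitian := (hB _).1
  have hrank : B0.rank = Fintype.card {i // hH.eigenvalues i ≠ 0} :=
    hH.rank_eq_card_non_zero_eigs
  set c := Fintype.card {i // hH.eigenvalues i ≠ 0} with hc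
  have hα' : (A (Fin.last p) * B0).trace = α := by rw [hfact]; exact hM'₄
  -- `c ≠ 0`
  have hc0 : c ≠ 0 := by
    intro h0
    have hemp : IsEmpty {i // hH.eigenvalues i ≠ 0} := Fintype.card_eq_zero_iff.mp h0
    have hall : ∀ j, hH.eigenvalues j = 0 := by
      intro j; by_contra hj; exact hemp.false ⟨j, hj⟩
    have hB00 : B0 = 0 := by
      have hst := hH.spectral_theorem
      rw [hst]
      have hz : Matrix.diagonal (RCLike.ofReal ∘ hH.eigenvalues : Fin (k+1) → ℝ) = 0 := by
        ext a b
        by_cases hab : a = b <;>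
          simp [Matrix.diagonal_apply, hab, Function.comp_apply, hall]
      rw [hz]
      simp
    rw [hB00] at hα'
    simp at hα'
    exact absurd hα'.symm (ne_of_gt hα)
  -- `c ≤ 1`
  have hc1 : c ≤ 1 := by
    by_contra hgt
    push_neg at hgt
    obtain ⟨a, b, hne⟩ := Fintype.exists_pair_of_one_lt_card hgt
    obtain ⟨j1, hj1⟩ := a
    obtain ⟨j2, hj2⟩ := b
    have hjne : j1 ≠ j2 := fun h => hne (by simp [h])
    have hk1 : 1 ≤ k := by
      have h1 : c ≤ Fintype.card (Fin (k+1)) := hc ▸ Fintype.card_subtype_le _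
      rw [Fintype.card_fin] at h1
      omega
    set v : Fin (k+1) → Fin (k+1) → ℝ := fun j => ⇑(hH.eigenvectorBasis j) with hv
    -- completeness of the eigenbasis
    have hcomp : ∀ x y, ∑ j, v j x * v j y = if x = y then (1:ℝ) else 0 := by
      intro x y
      have hU : (hH.eigenvectorUnitary : Matrix (Fin (k+1)) (Fin (k+1)) ℝ) *
          star (hH.eigenvectorUnitary : Matrix (Fin (k+1)) (Fin (k+1)) ℝ) = 1 :=
        Matrix.mem_unitaryGroup_iff.mp hH.eigenvectorUnitary.2
      have := congrArg (fun m => m x y) hU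
      simpa [Matrix.mul_apply, Matrix.one_apply, hv] using this
    -- the last-row psd factors annihilate the eigenvectors with nonzero eigenvalue
    have hAB : ∀ i : Fin p, A i.castSucc * B0 = 0 := fun i =>
      aux_psd_mul_eq_zero (hA _) (hB _) (by rw [hfact]; exact hM'₂ i)
    have hAv : ∀ i : Fin p, ∀ j, hH.eigenvalues j ≠ 0 → A i.castSucc *ᵥ v j = 0 := by
      intro i j hj
      have h1 : A i.castSucc *ᵥ (B0 *ᵥ v j) = 0 := by
        rw [Matrix.mulVec_mulVec, hAB i]; simp
      rw [hv] at h1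
      rw [hH.mulVec_eigenvectorBasis, Matrix.mulVec_smul] at h1
      exact (smul_eq_zero.mp h1).resolve_left hj
    -- projection onto the orthogonal complement of the two eigenvectors
    set s : Finset (Fin (k+1)) := ({j1, j2} : Finset (Fin (k+1)))ᶜ with hs
    have hscard : s.card = k - 1 := by
      rw [hs, Finset.card_compl, Finset.card_pair hjne, Fintype.card_fin]
      omega
    set f := s.orderEmbOfFin hscard with hf
    set C : Matrix (Fin (k-1)) (Fin (k+1)) ℝ := Matrix.of fun a x => v (f a) x with hCdef
    set P : Matrix (Fin (k+1)) (Fin (k+1)) ℝ :=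
      1 - vecMulVec (v j1) (v j1) - vecMulVec (v j2) (v j2) with hP
    have himage : Finset.image (f : Fin (k-1) → Fin (k+1)) Finset.univ = s := by
      apply Finset.coe_injective
      rw [Finset.coe_image, Finset.coe_univ, Set.image_univ]
      exact Finset.range_orderEmbOfFin s hscard
    have hCC : Cᴴ * C = P := by
      ext x y
      have hsum : ∑ a : Fin (k-1), v (f a) x * v (f a) y = ∑ j ∈ s, v j x * v j y := by
        rw [← himage, Finset.sum_image (fun a _ b _ h => f.injective h)]
      have hpair : ∑ j ∈ ({j1, j2} : Finset (Fin (k+1))), v j x * v j y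
          = v j1 x * v j1 y + v j2 x * v j2 y := Finset.sum_pair hjne
      have hsplit := Finset.sum_compl_add_sum ({j1, j2} : Finset (Fin (k+1)))
        (fun j => v j x * v j y)
      have hfull := hcomp x y
      have hL : (Cᴴ * C) x y = ∑ a : Fin (k-1), v (f a) x * v (f a) y := by
        simp [Matrix.mul_apply, Matrix.conjTranspose_apply, hCdef]
      have hR : P x y = (if x = y then (1:ℝ) else 0)
          - v j1 x * v j1 y - v j2 x * v j2 y := by
        simp [hP, Matrix.sub_apply, Matrix.one_apply, Matrix.vecMulVec_apply]
      rw [hL, hR, hsum]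
      rw [hs]
      linarith [hsplit, hpair, hfull]
    have hPH : Pᴴ = P := by
      ext x y
      simp [hP, Matrix.conjTranspose_apply, Matrix.one_apply, Matrix.vecMulVec_apply,
        mul_comm, eq_comm]
    have hAP : ∀ i : Fin p, A i.castSucc * P = A i.castSucc := by
      intro i
      rw [hP, Matrix.mul_sub, Matrix.mul_sub, Matrix.mul_one,
        aux_mul_vecMulVec, aux_mul_vecMulVec, hAv i j1 hj1, hAv i j2 hj2,
        aux_vecMulVec_zero, aux_vecMulVec_zero]
      simp
    have hPA : ∀ i : Fin p, P * A i.castSucc = A i.castSucc := by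
      intro i
      have := congrArg Matrix.conjTranspose (hAP i)
      rwa [Matrix.conjTranspose_mul, hPH, (hA i.castSucc).1] at this
    -- the size-(k-1) psd factorization of M
    have hfact' : HasPsdFact M (k-1) := by
      refine ⟨fun i => C * A i.castSucc * Cᴴ, fun j => C * B j.castSucc * Cᴴ,
        fun i => (hA _).mul_mul_conjTranspose_same C,
        fun j => (hB _).mul_mul_conjTranspose_same C, ?_⟩
      intro i j
      have key : C * A i.castSucc * Cᴴ * (C * B j.castSucc * Cᴴ)
          = C * (A i.castSucc * B j.castSucc) * Cᴴ := by
        calc C * A i.castSucc * Cᴴ * (C * B j.castSucc * Cᴴ)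
            = C * (A i.castSucc * (Cᴴ * C) * B j.castSucc) * Cᴴ := by
              simp only [Matrix.mul_assoc]
          _ = C * (A i.castSucc * B j.castSucc) * Cᴴ := by rw [hCC, hAP i]
      rw [key, Matrix.trace_mul_cycle, ← Matrix.mul_assoc, hCC, hPA i, hfact, hM'₁]
    have hle := hk.2 hfact'
    omega
  rw [hrank]
  omega
end

section
/- If B is a nonzero real symmetric positive semidefinite k×k matrix of rank r and A_1,...,A_p are psd k×k matrices with Tr(B A_i) = 0 for all i, then there is an orthogonal change of basis under which B is diagonal with its nonzero eigenvalues in the first r positions and each transformed A_i has zeros in its first r rows and columns; consequently any nonnegative matrix factorized by the A_i against arbitrary psd matrices B_j (via trace inner products) admits a psd factorization of size k − r. -/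
/-- A real psd matrix has nonnegative diagonal. -/
lemma psd_diag_nonneg {n : ℕ} {M : Matrix (Fin n) (Fin n) ℝ} (hM : M.PosSemidef)
    (t : Fin n) : 0 ≤ M t t := by
  open MatrixOrder Matrix.Norms.L2Operator in obtain ⟨C, rfl⟩ := CStarAlgebra.nonneg_iff_eq_star_mul_self.mp hM.nonneg
  simp only [Matrix.mul_apply, Matrix.star_apply, star_trivial]
  exact Finset.sum_nonneg fun u _ => mul_self_nonneg _

/-- A real psd matrix with a zero diagonal entry has the whole row zero. -/
lemma psd_row_zero {n : ℕ} {M : Matrix (Fin n) (Fin n) ℝ} (hM : M.PosSemidef)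
    {s : Fin n} (hs : M s s = 0) (t : Fin n) : M s t = 0 := by
  open MatrixOrder Matrix.Norms.L2Operator in obtain ⟨C, rfl⟩ := CStarAlgebra.nonneg_iff_eq_star_mul_self.mp hM.nonneg
  simp only [Matrix.mul_apply, Matrix.star_apply, star_trivial] at hs ⊢
  have hcol : ∀ u, C u s = 0 := by
    intro u
    have h := (Finset.sum_eq_zero_iff_of_nonneg
      (fun u _ => mul_self_nonneg (C u s))).mp hs u (Finset.mem_univ u)
    exact mul_self_eq_zero.mp h
  exact Finset.sum_eq_zero fun u _ => by rw [hcol u, zero_mul]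

/-- if `B` is a nonzero psd matrix of rank `r` and the psd matrices `A i`
satisfy `Tr(B * A i) = 0`, then there is an orthogonal change of basis diagonalizing `B`
with its nonzero eigenvalues in the first `r` positions and making each `A i` vanish on
the first `r` rows and columns; consequently any nonnegative matrix factorized by the
`A i` against arbitrary psd matrices admits a psd factorization of size `k - r`. -/
theorem stmt6 (k r p q : ℕ) (B : Matrix (Fin k) (Fin k) ℝ)
    (hB : B.PosSemidef) (hB0 : B ≠ 0) (hBr : B.rank = r)
    (A : Fin p → Matrix (Fin k) (Fin k) ℝ) (hA : ∀ i, (A i).PosSemidef)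
    (horth : ∀ i, (B * A i).trace = 0) :
    (∃ U : Matrix (Fin k) (Fin k) ℝ, U ∈ Matrix.orthogonalGroup (Fin k) ℝ ∧
      ∃ dvec : Fin k → ℝ,
        U.transpose * B * U = Matrix.diagonal dvec ∧
        (∀ s : Fin k, s.val < r → dvec s ≠ 0) ∧
        (∀ s : Fin k, r ≤ s.val → dvec s = 0) ∧
        ∀ (i : Fin p) (s t : Fin k), (s.val < r ∨ t.val < r) → (U.transpose * A i * U) s t = 0) ∧
    ∀ (M : Matrix (Fin p) (Fin q) ℝ) (Bs : Fin q → Matrix (Fin k) (Fin k) ℝ),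
      (∀ i j, 0 ≤ M i j) → (∀ j, (Bs j).PosSemidef) →
      (∀ i j, (A i * Bs j).trace = M i j) → HasPsdFact M (k - r) := by
  classical
  have hH : B.IsHermitian := hB.1
  set d0 : Fin k → ℝ := hH.eigenvalues with hd0
  set σ : Equiv.Perm (Fin k) := Tuple.sort (fun i => - d0 i) with hσdef
  set d : Fin k → ℝ := fun i => d0 (σ i) with hddef
  have hdnn : ∀ i, 0 ≤ d i := fun i => hB.eigenvalues_nonneg _
  have hanti : Antitone d := by
    intro a b hab
    have h := Tuple.monotone_sort (fun i => - d0 i) hab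
    simp only [Function.comp_apply] at h
    simpa [hddef] using neg_le_neg_iff.mp h
  -- cardinality of nonzero entries of d is r
  have hcard : (Finset.univ.filter fun i => d i ≠ 0).card = r := by
    have h1 : B.rank = Fintype.card {i // d0 i ≠ 0} := hH.rank_eq_card_non_zero_eigs
    have h2 : Fintype.card {i // d i ≠ 0} = Fintype.card {i // d0 i ≠ 0} :=
      Fintype.card_congr (σ.subtypeEquiv (fun i => Iff.rfl))
    rw [← Fintype.card_subtype, h2, ← h1, hBr]
  have hkey : ∀ s : Fin k, s.val < r ↔ d s ≠ 0 := by
    intro s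
    constructor
    · intro hs
      intro hzero
      have hsub : (Finset.univ.filter fun i => d i ≠ 0) ⊆ Finset.Iio s := by
        intro t ht
        simp only [Finset.mem_filter, Finset.mem_univ, true_and] at ht
        rw [Finset.mem_Iio]
        by_contra hts
        have hle : s ≤ t := le_of_not_gt hts
        have h1 : d t ≤ d s := hanti hle
        rw [hzero] at h1
        exact ht (le_antisymm h1 (hdnn t))
      have hc := Finset.card_le_card hsub
      rw [hcard, Fin.card_Iio] at hc
      omega
    · intro hne
      by_contra hs
      have hrs : r ≤ s.val := le_of_not_gt hs
      have hsub : Finset.Iic s ⊆ Finset.univ.filter fun i => d i ≠ 0 := by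
        intro t ht
        rw [Finset.mem_Iic] at ht
        simp only [Finset.mem_filter, Finset.mem_univ, true_and]
        intro h0
        have h1 : d s ≤ d t := hanti ht
        rw [h0] at h1
        exact hne (le_antisymm h1 (hdnn s))
      have hc := Finset.card_le_card hsub
      rw [hcard, Fin.card_Iic] at hc
      omega
  -- the orthogonal matrix
  set V : Matrix (Fin k) (Fin k) ℝ := (hH.eigenvectorUnitary : Matrix (Fin k) (Fin k) ℝ) with hVdef
  have hVmem : V ∈ Matrix.unitaryGroup (Fin k) ℝ := (hH.eigenvectorUnitary).2
  have hstar : ∀ (N : Matrix (Fin k) (Fin k) ℝ), star N = N.transpose := by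
    intro N; ext i j; simp [Matrix.star_apply]
  have hV1 : V.transpose * V = 1 := by
    rw [← hstar]; exact Matrix.mem_unitaryGroup_iff'.mp hVmem
  have hspec : V.transpose * B * V = Matrix.diagonal d0 := by
    have h := hH.conjStarAlgAut_star_eigenvectorUnitary
    rw [Unitary.conjStarAlgAut_star_apply, hstar] at h
    simpa using h
  set U : Matrix (Fin k) (Fin k) ℝ := V.submatrix id σ with hUdef
  have hUt : U.transpose = V.transpose.submatrix σ id := by
    rw [hUdef, Matrix.transpose_submatrix]
  have hUBU : U.transpose * B * U = Matrix.diagonal d := by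
    have h1 : (V.transpose * B * V).submatrix σ σ = U.transpose * B * U := by
      rw [Matrix.submatrix_mul _ _ σ id σ Function.bijective_id,
        Matrix.submatrix_mul _ _ σ id id Function.bijective_id,
        Matrix.submatrix_id_id, hUt, hUdef]
    rw [← h1, hspec, Matrix.submatrix_diagonal_equiv]
    rfl
  have hUtU : U.transpose * U = 1 := by
    have h1 : (V.transpose * V).submatrix σ σ = U.transpose * U := by
      rw [Matrix.submatrix_mul _ _ σ id σ Function.bijective_id, hUt, hUdef]
    rw [← h1, hV1, Matrix.submatrix_one_equiv]
  have hUmem : U ∈ Matrix.orthogonalGroup (Fin k) ℝ := by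
    rw [Matrix.mem_orthogonalGroup_iff']
    exact hUtU
  have hUUt : U * U.transpose = 1 := by
    rw [mul_eq_one_comm.mp hUtU]
  have hconjTr : U.transpose = U.conjTranspose := by
    rw [← hstar]; rfl
  -- conjugated matrices are psd
  have hApsd : ∀ (X : Matrix (Fin k) (Fin k) ℝ), X.PosSemidef →
      (U.transpose * X * U).PosSemidef := by
    intro X hX
    rw [hconjTr]
    exact hX.conjTranspose_mul_mul_same U
  -- conjugation preserves traces of products
  have hconj : ∀ (X Y : Matrix (Fin k) (Fin k) ℝ),
      ((U.transpose * X * U) * (U.transpose * Y * U)).trace = (X * Y).trace := by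
    intro X Y
    have e0 : U * (U.transpose * (Y * U)) = Y * U := by
      rw [← mul_assoc, hUUt, one_mul]
    have e1 : (U.transpose * X * U) * (U.transpose * Y * U) = U.transpose * (X * Y) * U := by
      simp only [mul_assoc]
      rw [e0]
    rw [e1, Matrix.trace_mul_cycle, ← mul_assoc, hUUt, one_mul]
  -- diagonal entries of conjugated A i vanish in first r positions
  have hdiag0 : ∀ (i : Fin p) (s : Fin k), s.val < r → (U.transpose * A i * U) s s = 0 := by
    intro i s hs
    have hps : (U.transpose * A i * U).PosSemidef := hApsd _ (hA i)
    have htr : (Matrix.diagonal d * (U.transpose * A i * U)).trace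
        = ∑ t, d t * (U.transpose * A i * U) t t := by
      simp [Matrix.trace, Matrix.diag, Matrix.mul_apply, Matrix.diagonal_apply,
        ite_mul, zero_mul]
    have htr0 : (Matrix.diagonal d * (U.transpose * A i * U)).trace = 0 := by
      rw [← hUBU, hconj B (A i)]
      exact horth i
    have hterm : ∀ t ∈ Finset.univ, (0:ℝ) ≤ d t * (U.transpose * A i * U) t t :=
      fun t _ => mul_nonneg (hdnn t) (psd_diag_nonneg hps t)
    have hall := (Finset.sum_eq_zero_iff_of_nonneg hterm).mp (by rw [← htr, htr0])
    have hds : d s ≠ 0 := (hkey s).mp hs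
    have := hall s (Finset.mem_univ s)
    rcases mul_eq_zero.mp this with h | h
    · exact absurd h hds
    · exact h
  have hzero : ∀ (i : Fin p) (s t : Fin k), (s.val < r ∨ t.val < r) →
      (U.transpose * A i * U) s t = 0 := by
    intro i s t hst
    have hps : (U.transpose * A i * U).PosSemidef := hApsd _ (hA i)
    rcases hst with h | h
    · exact psd_row_zero hps (hdiag0 i s h) t
    · have h1 : (U.transpose * A i * U) t s = 0 := psd_row_zero hps (hdiag0 i t h) s
      have hsym : (U.transpose * A i * U) s t = (U.transpose * A i * U) t s := by
        have h2 := congrFun (congrFun hps.1 s) t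
        simpa [Matrix.conjTranspose_apply] using h2.symm
      rw [hsym, h1]
  refine ⟨⟨U, hUmem, d, hUBU, fun s hs => (hkey s).mp hs,
    fun s hs => not_not.mp (fun hne => absurd ((hkey s).mpr hne) (by omega)), hzero⟩, ?_⟩
  -- the consequence
  intro M Bs hMnn hBspsd hfact
  have hrk : r ≤ k := by
    have h := Finset.card_filter_le Finset.univ (fun i => d i ≠ 0)
    rw [hcard] at h
    simpa using h
  have hk2 : r + (k - r) = k := Nat.add_sub_cancel' hrk
  set e : Fin (k - r) → Fin k := fun j => ⟨r + j.val, by have := j.isLt; omega⟩ with hedef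
  set E : (Fin r ⊕ Fin (k - r)) ≃ Fin k := finSumFinEquiv.trans (finCongr hk2) with hEdef
  have hEr : ∀ a : Fin (k - r), E (Sum.inr a) = e a := by
    intro a
    apply Fin.ext
    simp [hEdef, hedef]
  have hEl : ∀ a : Fin r, (E (Sum.inl a)).val < r := by
    intro a
    simp [hEdef]
  have hsum : ∀ (X Y : Matrix (Fin k) (Fin k) ℝ),
      (∀ s t, (s.val < r ∨ t.val < r) → X s t = 0) →
      (X * Y).trace = ((X.submatrix e e) * (Y.submatrix e e)).trace := by
    intro X Y hX
    have lhs : (X * Y).trace = ∑ s, ∑ t, X s t * Y t s := by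
      simp [Matrix.trace, Matrix.diag, Matrix.mul_apply]
    have rhs : ((X.submatrix e e) * (Y.submatrix e e)).trace
        = ∑ a, ∑ b, X (e a) (e b) * Y (e b) (e a) := by
      simp [Matrix.trace, Matrix.diag, Matrix.mul_apply, Matrix.submatrix_apply]
    rw [lhs, rhs]
    rw [← Equiv.sum_comp E (fun s => ∑ t, X s t * Y t s), Fintype.sum_sum_type]
    have hz1 : ∑ a : Fin r, ∑ t, X (E (Sum.inl a)) t * Y t (E (Sum.inl a)) = 0 :=
      Finset.sum_eq_zero fun a _ => Finset.sum_eq_zero fun t _ => by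
        rw [hX _ _ (Or.inl (hEl a)), zero_mul]
    rw [hz1, zero_add]
    refine Finset.sum_congr rfl fun a _ => ?_
    rw [← Equiv.sum_comp E (fun t => X (E (Sum.inr a)) t * Y t (E (Sum.inr a))),
      Fintype.sum_sum_type]
    have hz2 : ∑ b : Fin r, X (E (Sum.inr a)) (E (Sum.inl b)) * Y (E (Sum.inl b)) (E (Sum.inr a)) = 0 :=
      Finset.sum_eq_zero fun b _ => by rw [hX _ _ (Or.inr (hEl b)), zero_mul]
    rw [hz2, zero_add]
    refine Finset.sum_congr rfl fun b _ => ?_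
    rw [hEr a, hEr b]
  refine ⟨fun i => ((U.transpose * A i * U).submatrix e e),
    fun j => ((U.transpose * Bs j * U).submatrix e e),
    fun i => (hApsd _ (hA i)).submatrix e,
    fun j => (hApsd _ (hBspsd j)).submatrix e, ?_⟩
  intro i j
  rw [← hsum _ _ (hzero i), hconj, hfact]
end

section
/- The psd rank of an n×n diagonal matrix with strictly positive diagonal entries is exactly n, and every psd factorization of such a matrix of size n uses only rank-one factors. -/
open Matrix
open scoped MatrixOrder

/-- A nonzero matrix sends some vector to a nonzero vector. -/
lemma aux_exists_mulVec_ne_zero {k : ℕ} {M : Matrix (Fin k) (Fin k) ℝ} (hM : M ≠ 0) :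
    ∃ u, M *ᵥ u ≠ 0 := by
  by_contra h
  push_neg at h
  apply hM
  ext i j
  have := congrFun (h (Pi.single j 1)) i
  simpa using this

lemma aux_trace_self_mul_conjTranspose {k : ℕ} {C : Matrix (Fin k) (Fin k) ℝ}
    (h : (C * Cᴴ).trace = 0) : C = 0 := by
  have hsum : ∑ i, ∑ j, C i j * C i j = 0 := by
    simpa [Matrix.trace, Matrix.mul_apply, Matrix.diag] using h
  ext i j
  have h1 : ∀ i ∈ (Finset.univ : Finset (Fin k)), 0 ≤ ∑ j, C i j * C i j :=
    fun i _ => Finset.sum_nonneg fun j _ => mul_self_nonneg _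
  have h2 := (Finset.sum_eq_zero_iff_of_nonneg h1).mp hsum i (Finset.mem_univ i)
  have h3 : ∀ j ∈ (Finset.univ : Finset (Fin k)), 0 ≤ C i j * C i j :=
    fun j _ => mul_self_nonneg _
  have h4 := (Finset.sum_eq_zero_iff_of_nonneg h3).mp h2 j (Finset.mem_univ j)
  have := mul_self_eq_zero.mp h4
  simpa using this

/-- For psd matrices, zero trace of product forces the product to vanish. -/
lemma aux_mul_eq_zero {k : ℕ} {A B : Matrix (Fin k) (Fin k) ℝ}
    (hA : A.PosSemidef) (hB : B.PosSemidef) (h : (A * B).trace = 0) : A * B = 0 := by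
  set s := CFC.sqrt A with hs
  set t := CFC.sqrt B with ht
  have hss : s * s = A := CFC.sqrt_mul_sqrt_self A hA.nonneg
  have htt : t * t = B := CFC.sqrt_mul_sqrt_self B hB.nonneg
  have hsH : sᴴ = s := (CFC.sqrt_nonneg A).posSemidef.isHermitian
  have htH : tᴴ = t := (CFC.sqrt_nonneg B).posSemidef.isHermitian
  have hC : ((s * t) * (s * t)ᴴ).trace = 0 := by
    have : (s * t) * (s * t)ᴴ = s * (t * t) * s := by
      rw [conjTranspose_mul, hsH, htH]; simp only [Matrix.mul_assoc]
    rw [this, Matrix.trace_mul_comm, ← Matrix.mul_assoc, hss, htt, h]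
  have hC0 : s * t = 0 := aux_trace_self_mul_conjTranspose hC
  calc A * B = s * (s * t) * t := by rw [← hss, ← htt]; noncomm_ring
    _ = 0 := by rw [hC0, Matrix.mul_zero, Matrix.zero_mul]

/-- The key construction: a linearly independent family of "witness" vectors. -/
lemma aux_family {n k : ℕ} (d : Fin n → ℝ) (hd : ∀ i, 0 < d i)
    (A B : Fin n → Matrix (Fin k) (Fin k) ℝ)
    (hA : ∀ i, (A i).PosSemidef) (hB : ∀ j, (B j).PosSemidef)
    (htr : ∀ i j, (A i * B j).trace = Matrix.diagonal d i j) :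
    ∃ v : Fin n → (Fin k → ℝ), LinearIndependent ℝ v ∧
      (∀ i, (A i) *ᵥ v i ≠ 0) ∧ (∀ i j, j ≠ i → (A j) *ᵥ v i = 0) := by
  have hzero : ∀ i j, i ≠ j → A i * B j = 0 := by
    intro i j hij
    refine aux_mul_eq_zero (hA i) (hB j) ?_
    rw [htr i j, Matrix.diagonal_apply_ne _ hij]
  have hne : ∀ i, A i * B i ≠ 0 := by
    intro i h0
    have := htr i i
    rw [h0, Matrix.trace_zero, Matrix.diagonal_apply_eq] at this
    exact absurd this.symm (ne_of_gt (hd i))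
  have hpick : ∀ i, ∃ u, (A i * B i) *ᵥ u ≠ 0 := fun i => aux_exists_mulVec_ne_zero (hne i)
  choose u hu using hpick
  refine ⟨fun i => (B i) *ᵥ u i, ?_, ?_, ?_⟩
  · rw [Fintype.linearIndependent_iff]
    intro g hg j
    have h0 : (A j) *ᵥ (∑ i, g i • (B i) *ᵥ u i) = 0 := by rw [hg, Matrix.mulVec_zero]
    have hexp : (A j) *ᵥ (∑ i, g i • (B i) *ᵥ u i)
        = ∑ i, g i • ((A j) *ᵥ ((B i) *ᵥ u i)) := by
      simp only [← Matrix.mulVecLin_apply, map_sum]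
      exact Finset.sum_congr rfl fun i _ => _root_.map_smul _ _ _
    have hterm : ∀ i ∈ Finset.univ, i ≠ j → g i • ((A j) *ᵥ ((B i) *ᵥ u i)) = 0 := by
      intro i _ hij
      rw [Matrix.mulVec_mulVec, hzero j i (Ne.symm hij), Matrix.zero_mulVec, smul_zero]
    have := Finset.sum_eq_single j hterm (fun h => absurd (Finset.mem_univ j) h)
    rw [hexp, this] at h0
    rw [Matrix.mulVec_mulVec] at h0
    by_contra hgj
    exact hu j (by simpa [smul_eq_zero, hgj] using h0)
  · intro i
    rw [Matrix.mulVec_mulVec]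
    exact hu i
  · intro i j hji
    rw [Matrix.mulVec_mulVec, hzero j i hji, Matrix.zero_mulVec]

/-- From the family: each `A j` has rank exactly one (when `k = n`). -/
lemma aux_rank_one {n : ℕ} (A : Fin n → Matrix (Fin n) (Fin n) ℝ)
    (v : Fin n → (Fin n → ℝ)) (hv : LinearIndependent ℝ v)
    (hne : ∀ i, (A i) *ᵥ v i ≠ 0) (h0 : ∀ i j, j ≠ i → (A j) *ᵥ v i = 0)
    (j : Fin n) : (A j).rank = 1 := by
  -- rank ≥ 1
  have hAne : A j ≠ 0 := by
    intro h
    apply hne j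
    rw [h, Matrix.zero_mulVec]
  have hrank_pos : 0 < (A j).rank := by
    rcases Nat.eq_zero_or_pos (A j).rank with h | h
    · exfalso
      have hbot : LinearMap.range (A j).mulVecLin = ⊥ :=
        Submodule.finrank_eq_zero.mp h
      have h2 : (A j).mulVecLin = 0 := LinearMap.range_eq_bot.mp hbot
      apply hAne
      ext a b
      have h3 : (A j) *ᵥ (Pi.single b 1) = 0 := by
        rw [← Matrix.mulVecLin_apply, h2]; rfl
      simpa using congrFun h3 a
    · exact h
  -- rank ≤ 1 : kernel has dimension ≥ n - 1
  have hker : ∀ i : {i : Fin n // i ≠ j}, v i.1 ∈ LinearMap.ker (A j).mulVecLin := by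
    intro i
    simpa using h0 i.1 j (Ne.symm i.2)
  have hli : LinearIndependent ℝ (fun i : {i : Fin n // i ≠ j} => v i.1) :=
    hv.comp Subtype.val Subtype.val_injective
  have hspan : Submodule.span ℝ (Set.range (fun i : {i : Fin n // i ≠ j} => v i.1))
      ≤ LinearMap.ker (A j).mulVecLin := by
    rw [Submodule.span_le]
    rintro x ⟨i, rfl⟩
    exact hker i
  have hcard : Fintype.card {i : Fin n // i ≠ j} = n - 1 := by
    have := Fintype.card_subtype_compl (fun i : Fin n => i = j)
    simpa [Fintype.card_subtype_eq] using this
  have hfs : Module.finrank ℝ (Submodule.span ℝ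
      (Set.range (fun i : {i : Fin n // i ≠ j} => v i.1))) = n - 1 := by
    rw [finrank_span_eq_card hli, hcard]
  have hkerge : n - 1 ≤ Module.finrank ℝ (LinearMap.ker (A j).mulVecLin) := by
    rw [← hfs]
    exact Submodule.finrank_mono hspan
  have hrn : (A j).rank + Module.finrank ℝ (LinearMap.ker (A j).mulVecLin) = n := by
    have := LinearMap.finrank_range_add_finrank_ker (A j).mulVecLin
    rw [Module.finrank_fintype_fun_eq_card, Fintype.card_fin] at this
    exact this
  have hn1 : 1 ≤ n := Fin.pos j
  omega

/-- an `n × n` diagonal matrix with strictly positive diagonal has psd rank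
exactly `n`, and every psd factorization of size `n` uses only rank-one factors. -/
theorem stmt7 (n : ℕ) (d : Fin n → ℝ) (hd : ∀ i, 0 < d i) :
    IsLeast {k | HasPsdFact (Matrix.diagonal d) k} n ∧
    ∀ (A B : Fin n → Matrix (Fin n) (Fin n) ℝ),
      (∀ i, (A i).PosSemidef) → (∀ j, (B j).PosSemidef) →
      (∀ i j, (A i * B j).trace = Matrix.diagonal d i j) →
      (∀ i, (A i).rank = 1) ∧ (∀ j, (B j).rank = 1) := by
  have hBtr : ∀ (A B : Fin n → Matrix (Fin n) (Fin n) ℝ),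
      (∀ i j, (A i * B j).trace = Matrix.diagonal d i j) →
      (∀ i j, (B i * A j).trace = Matrix.diagonal d i j) := by
    intro A B htr i j
    rw [Matrix.trace_mul_comm, htr j i]
    by_cases h : i = j
    · subst h; rfl
    · rw [Matrix.diagonal_apply_ne _ h, Matrix.diagonal_apply_ne _ (Ne.symm h)]
  constructor
  · constructor
    · -- membership: explicit diagonal factorization
      refine ⟨fun i => Matrix.diagonal (Pi.single i (d i)),
              fun j => Matrix.diagonal (Pi.single j 1), ?_, ?_, ?_⟩
      · intro i
        refine Matrix.posSemidef_diagonal_iff.mpr fun m => ?_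
        rcases eq_or_ne m i with rfl | h
        · simp [le_of_lt (hd m)]
        · simp [Pi.single_eq_of_ne h]
      · intro j
        refine Matrix.posSemidef_diagonal_iff.mpr fun m => ?_
        rcases eq_or_ne m j with rfl | h
        · simp
        · simp [Pi.single_eq_of_ne h]
      · intro i j
        rw [Matrix.diagonal_mul_diagonal, Matrix.trace_diagonal]
        rcases eq_or_ne i j with rfl | h
        · rw [Matrix.diagonal_apply_eq]
          rw [Finset.sum_eq_single i]
          · simp
          · intro m _ hmi; simp [Pi.single_eq_of_ne hmi]
          · simp
        · rw [Matrix.diagonal_apply_ne _ h]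
          refine Finset.sum_eq_zero fun m _ => ?_
          rcases eq_or_ne m i with rfl | hmi
          · simp [Pi.single_eq_of_ne h]
          · simp [Pi.single_eq_of_ne hmi]
    · -- lower bound
      rintro k ⟨A, B, hA, hB, htr⟩
      obtain ⟨v, hv, -, -⟩ := aux_family d hd A B hA hB htr
      have := hv.fintype_card_le_finrank
      simpa using this
  · intro A B hA hB htr
    constructor
    · intro i
      obtain ⟨v, hv, hne, h0⟩ := aux_family d hd A B hA hB htr
      exact aux_rank_one A v hv hne h0 i
    · intro j
      obtain ⟨v, hv, hne, h0⟩ := aux_family d hd B A hB hA (hBtr A B htr)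
      exact aux_rank_one B v hv hne h0 j
end

section
/- Let S be a (n+2)×f real matrix of rank n+1 with nonnegative entries such that every column of S has at least n zero entries. Then the entrywise nonnegative square root of S also has rank n+1. (This applies to the slack matrix of an n-dimensional polytope with n+2 vertices, proving such a polytope has psd rank n+1.) -/
open Module

/-- signed square: `x ↦ x|x|`. -/
noncomputable def sq' (x : ℝ) : ℝ := x * |x|

/-- signed square root. -/
noncomputable def rt (x : ℝ) : ℝ := Real.sqrt x - Real.sqrt (-x)

lemma sq'_rt (x : ℝ) : sq' (rt x) = x := by
  unfold sq' rt
  rcases le_or_gt 0 x with hx | hx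
  · rw [Real.sqrt_eq_zero'.mpr (by linarith : -x ≤ 0), sub_zero,
      abs_of_nonneg (Real.sqrt_nonneg x), Real.mul_self_sqrt hx]
  · rw [Real.sqrt_eq_zero'.mpr (by linarith : x ≤ 0), zero_sub,
      abs_neg, abs_of_nonneg (Real.sqrt_nonneg (-x))]
    have := Real.mul_self_sqrt (by linarith : (0:ℝ) ≤ -x)
    nlinarith [this]

lemma rt_sq' (x : ℝ) : rt (sq' x) = x := by
  unfold sq' rt
  rcases le_or_gt 0 x with hx | hx
  · rw [abs_of_nonneg hx, ← pow_two, Real.sqrt_sq hx,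
      Real.sqrt_eq_zero'.mpr (by nlinarith : -(x^2) ≤ 0), sub_zero]
  · rw [abs_of_neg hx]
    have h1 : x * -x ≤ 0 := by nlinarith
    rw [Real.sqrt_eq_zero'.mpr h1, zero_sub]
    have : -(x * -x) = (-x)^2 := by ring
    rw [this, Real.sqrt_sq (by linarith)]
    ring

lemma sq'_inj : Function.Injective sq' :=
  Function.LeftInverse.injective rt_sq'

lemma sq'_eq_zero {x : ℝ} : sq' x = 0 ↔ x = 0 := by
  simp [sq', mul_eq_zero, abs_eq_zero]

lemma sq'_neg (x : ℝ) : sq' (-x) = - sq' x := by unfold sq'; rw [abs_neg]; ring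

lemma sq'_mul (x y : ℝ) : sq' (x * y) = sq' x * sq' y := by
  unfold sq'; rw [abs_mul]; ring

lemma sq'_mul_sq {c t : ℝ} (ht : 0 ≤ t) : sq' c * t^2 = sq' (c * t) := by
  rw [sq'_mul]; unfold sq'; rw [abs_of_nonneg ht]; ring

lemma rt_mul (x y : ℝ) : rt (x * y) = rt x * rt y := by
  apply sq'_inj
  rw [sq'_rt, sq'_mul, sq'_rt, sq'_rt]

lemma rt_eq_zero {x : ℝ} : rt x = 0 ↔ x = 0 := by
  constructor
  · intro h; have := sq'_rt x; rw [h] at this; simpa [sq'] using this.symm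
  · rintro rfl; simp [rt]

/-- If at most two coordinates of `u` are nonzero, then `∑ u = 0` iff `∑ sq' ∘ u = 0`. -/
lemma sum_sq'_eq_zero_iff {m : ℕ} (u : Fin m → ℝ)
    (h : (Finset.univ.filter fun i => u i ≠ 0).card ≤ 2) :
    (∑ i, u i = 0) ↔ (∑ i, sq' (u i) = 0) := by
  classical
  set F := Finset.univ.filter fun i => u i ≠ 0 with hF
  clear_value F
  have hsum1 : ∑ i, u i = ∑ i ∈ F, u i := by
    rw [hF]; exact (Finset.sum_filter_of_ne (fun i _ hi => hi)).symm
  have hsum2 : ∑ i, sq' (u i) = ∑ i ∈ F, sq' (u i) := by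
    rw [hF]
    refine (Finset.sum_filter_of_ne ?_).symm
    intro i _ hsq h0
    exact hsq (by rw [h0]; simp [sq'])
  rw [hsum1, hsum2]
  have hmem : ∀ i ∈ F, u i ≠ 0 := by
    intro i hi; rw [hF] at hi; exact (Finset.mem_filter.mp hi).2
  have hc : F.card = 0 ∨ F.card = 1 ∨ F.card = 2 := by omega
  rcases hc with hc | hc | hc
  · rw [Finset.card_eq_zero.mp hc]; simp
  · obtain ⟨i, rfl⟩ := Finset.card_eq_one.mp hc
    have hi : u i ≠ 0 := hmem i (by simp)
    simp [sq'_eq_zero, hi]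
  · obtain ⟨i, k, hik, rfl⟩ := Finset.card_eq_two.mp hc
    have hi : u i ≠ 0 := hmem i (by simp)
    rw [Finset.sum_pair hik, Finset.sum_pair hik]
    constructor
    · intro h'
      have : u i = -(u k) := by linarith
      rw [this, sq'_neg]; ring
    · intro h'
      have h1 : sq' (u i) = sq' (-(u k)) := by rw [sq'_neg]; linarith
      have := sq'_inj h1
      linarith [this]

/-- if `S` is a nonnegative `(n+2) × f` matrix of rank `n+1` each of whose
columns has at least `n` zero entries, then the entrywise nonnegative square root of `S`
also has rank `n+1`. -/
theorem stmt12 (n f : ℕ) (S : Matrix (Fin (n+2)) (Fin f) ℝ)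
    (hS : ∀ i j, 0 ≤ S i j) (hrank : S.rank = n + 1)
    (hzeros : ∀ j, n ≤ ({i | S i j = 0} : Set (Fin (n+2))).ncard) :
    (Matrix.of fun i j => Real.sqrt (S i j)).rank = n + 1 := by
  classical
  set T : Matrix (Fin (n+2)) (Fin f) ℝ := Matrix.of fun i j => Real.sqrt (S i j) with hTdef
  have hTsq : ∀ i j, (T i j)^2 = S i j := fun i j => Real.sq_sqrt (hS i j)
  have hTzero : ∀ i j, T i j = 0 ↔ S i j = 0 := by
    intro i j
    constructor
    · intro h; rw [← hTsq i j, h]; ring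
    · intro h; simp [hTdef, h]
  -- each column of T has at most two nonzero entries
  have hcol : ∀ j, (Finset.univ.filter fun i => T i j ≠ 0).card ≤ 2 := by
    intro j
    have h1 : ({i | S i j = 0} : Set (Fin (n+2))).ncard
        = (Finset.univ.filter fun i => S i j = 0).card := by
      rw [Set.ncard_eq_toFinset_card']
      congr 1
      ext i; simp
    have h2 := Finset.card_filter_add_card_filter_not
      (s := (Finset.univ : Finset (Fin (n+2)))) (fun i => S i j = 0)
    have h3 : (Finset.univ.filter fun i => T i j ≠ 0)
        = (Finset.univ.filter fun i => ¬ (S i j = 0)) := by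
      apply Finset.filter_congr
      intro i _
      simp [hTzero i j]
    have h4 := hzeros j
    rw [h1] at h4
    rw [h3]
    simp only [Finset.card_univ, Fintype.card_fin] at h2
    omega
  -- membership in left kernels
  have memker : ∀ (M : Matrix (Fin (n+2)) (Fin f) ℝ) (c : Fin (n+2) → ℝ),
      c ∈ LinearMap.ker M.transpose.mulVecLin ↔ ∀ j, ∑ i, c i * M i j = 0 := by
    intro M c
    rw [LinearMap.mem_ker, Matrix.mulVecLin_apply]
    constructor
    · intro h j
      have := congrFun h j
      simpa [Matrix.mulVec, dotProduct, Matrix.transpose_apply, mul_comm] using this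
    · intro h
      funext j
      simpa [Matrix.mulVec, dotProduct, Matrix.transpose_apply, mul_comm] using h j
  -- the key correspondence between the two left kernels
  have keyIff : ∀ c : Fin (n+2) → ℝ,
      c ∈ LinearMap.ker T.transpose.mulVecLin ↔
      (fun i => sq' (c i)) ∈ LinearMap.ker S.transpose.mulVecLin := by
    intro c
    rw [memker, memker]
    apply forall_congr'
    intro j
    have hTnn : ∀ i, 0 ≤ T i j := fun i => Real.sqrt_nonneg _
    have e1 : ∀ i, sq' (c i) * S i j = sq' (c i * T i j) := by
      intro i
      rw [← hTsq i j, sq'_mul_sq (hTnn i)]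
    simp_rw [e1]
    exact sum_sq'_eq_zero_iff (fun i => c i * T i j)
      (le_trans (Finset.card_le_card (by
        intro i hi
        simp only [Finset.mem_filter, Finset.mem_univ, true_and] at hi ⊢
        intro h0; exact hi (by rw [h0, mul_zero]))) (hcol j))
  -- finrank of left kernel of S is 1
  have hrankS : S.transpose.rank = n + 1 := by rw [Matrix.rank_transpose]; exact hrank
  have hrn := LinearMap.finrank_range_add_finrank_ker (S.transpose.mulVecLin)
  rw [finrank_fin_fun] at hrn
  have hkerS : finrank ℝ (LinearMap.ker S.transpose.mulVecLin) = 1 := by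
    have : S.transpose.rank = finrank ℝ (LinearMap.range S.transpose.mulVecLin) := rfl
    omega
  -- pick a spanning vector of the left kernel of S
  have hne : LinearMap.ker S.transpose.mulVecLin ≠ ⊥ := by
    intro hbot
    rw [hbot] at hkerS
    simp at hkerS
  obtain ⟨a, haS, ha0⟩ := (Submodule.ne_bot_iff _).mp hne
  have hspanS : LinearMap.ker S.transpose.mulVecLin = Submodule.span ℝ {a} := by
    refine (Submodule.eq_of_le_of_finrank_eq ?_ ?_).symm
    · rw [Submodule.span_le, Set.singleton_subset_iff]; exact haS
    · rw [finrank_span_singleton ha0, hkerS]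
  -- rt a is in the left kernel of T and spans it
  have hrta : (fun i => rt (a i)) ∈ LinearMap.ker T.transpose.mulVecLin := by
    rw [keyIff]
    convert haS using 1
    funext i
    exact sq'_rt (a i)
  have hrta0 : (fun i => rt (a i)) ≠ 0 := by
    intro h
    apply ha0
    funext i
    have := congrFun h i
    simpa using rt_eq_zero.mp this
  have hspanT : LinearMap.ker T.transpose.mulVecLin
      = Submodule.span ℝ {fun i => rt (a i)} := by
    apply le_antisymm
    · intro c hc
      have hΦ := (keyIff c).mp hc
      rw [hspanS, Submodule.mem_span_singleton] at hΦ
      obtain ⟨μ, hμ⟩ := hΦ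
      have hc' : c = rt μ • (fun i => rt (a i)) := by
        funext i
        have h1 : sq' (c i) = μ * a i := by
          have := congrFun hμ i
          simpa using this.symm
        calc c i = rt (sq' (c i)) := (rt_sq' (c i)).symm
          _ = rt (μ * a i) := by rw [h1]
          _ = rt μ * rt (a i) := rt_mul μ (a i)
      rw [hc']
      exact Submodule.smul_mem _ _ (Submodule.mem_span_singleton_self _)
    · rw [Submodule.span_le, Set.singleton_subset_iff]; exact hrta
  have hkerT : finrank ℝ (LinearMap.ker T.transpose.mulVecLin) = 1 := by
    rw [hspanT]; exact finrank_span_singleton hrta0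
  -- conclude via rank-nullity for Tᵀ
  have hrnT := LinearMap.finrank_range_add_finrank_ker (T.transpose.mulVecLin)
  rw [finrank_fin_fun, hkerT] at hrnT
  have : T.transpose.rank = finrank ℝ (LinearMap.range T.transpose.mulVecLin) := rfl
  have hTt : T.transpose.rank = n + 1 := by omega
  rw [← Matrix.rank_transpose]
  exact hTt
end

section
/- Suppose (a_i) are real numbers with Σ_{i=1}^{m} a_i s_i = 0 for vectors s_i ∈ ℝ_{≥0}^f, where for every coordinate j at most two of the products a_i (s_i)_j are nonzero. Define b_i = sgn(a_i)·√|a_i| and t_i ∈ ℝ^f by (t_i)_j = √((s_i)_j). Then Σ_{i=1}^m b_i t_i = 0. -/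
lemma gmul (b x : ℝ) (hx : 0 ≤ x) :
    Real.sign b * Real.sqrt |b| * Real.sqrt x
      = Real.sign (b * x) * Real.sqrt |b * x| := by
  rcases eq_or_lt_of_le hx with h | h
  · simp [← h]
  · have hsx : Real.sign (b * x) = Real.sign b := by
      rcases lt_trichotomy b 0 with hb | hb | hb
      · rw [Real.sign_of_neg hb, Real.sign_of_neg (mul_neg_of_neg_of_pos hb h)]
      · simp [hb]
      · rw [Real.sign_of_pos hb, Real.sign_of_pos (mul_pos hb h)]
    rw [hsx, abs_mul, Real.sqrt_mul (abs_nonneg b), abs_of_nonneg hx, mul_assoc]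

lemma key (b c x y : ℝ) (hx : 0 ≤ x) (hy : 0 ≤ y)
    (h : b * x + c * y = 0) :
    Real.sign b * Real.sqrt |b| * Real.sqrt x
      + Real.sign c * Real.sqrt |c| * Real.sqrt y = 0 := by
  rw [gmul b x hx, gmul c y hy]
  have hcy : c * y = -(b * x) := by linarith
  rw [hcy, Real.sign_neg, abs_neg]
  ring

/-- if `∑ aᵢ sᵢ = 0` with `sᵢ ≥ 0` and in every coordinate at most two of
the products `aᵢ (sᵢ)ⱼ` are nonzero, then `∑ sgn(aᵢ)√|aᵢ| · √sᵢ = 0` (entrywise roots). -/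
theorem stmt13 (m f : ℕ) (a : Fin m → ℝ) (s : Fin m → (Fin f → ℝ))
    (hs : ∀ i j, 0 ≤ s i j)
    (hsum : ∑ i, a i • s i = 0)
    (hcard : ∀ j : Fin f, ({i | a i * s i j ≠ 0} : Set (Fin m)).ncard ≤ 2) :
    ∑ i, (Real.sign (a i) * Real.sqrt |a i|) • (fun j => Real.sqrt (s i j)) =
      (0 : Fin f → ℝ) := by
  funext j
  have hsumj : ∑ i, a i * s i j = 0 := by
    have := congrFun hsum j
    simpa [Finset.sum_apply] using this
  simp only [Finset.sum_apply, Pi.smul_apply, smul_eq_mul, Pi.zero_apply]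
  set T : Finset (Fin m) := Finset.univ.filter (fun i => a i * s i j ≠ 0) with hTdef
  have hmemT : ∀ i, i ∈ T ↔ a i * s i j ≠ 0 := by
    intro i; simp [hTdef]
  have hTcard : T.card ≤ 2 := by
    have hset : ({i | a i * s i j ≠ 0} : Set (Fin m)) = ↑T := by
      ext i; simp [hTdef]
    have := hcard j
    rwa [hset, Set.ncard_coe_finset] at this
  have hsumT : ∑ i ∈ T, a i * s i j = 0 := by
    rw [hTdef, Finset.sum_filter_ne_zero]; exact hsumj
  have hred : ∑ i, Real.sign (a i) * Real.sqrt |a i| * Real.sqrt (s i j)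
      = ∑ i ∈ T, Real.sign (a i) * Real.sqrt |a i| * Real.sqrt (s i j) := by
    refine (Finset.sum_filter_of_ne ?_).symm
    intro i _ hne
    intro h0
    rcases mul_eq_zero.mp h0 with h | h
    · exact hne (by simp [h])
    · exact hne (by simp [h])
  rw [hred]
  interval_cases h : T.card
  · rw [Finset.card_eq_zero.mp h]; simp
  · obtain ⟨i, hi⟩ := Finset.card_eq_one.mp h
    rw [hi] at hsumT
    simp only [Finset.sum_singleton] at hsumT
    have : i ∈ T := by rw [hi]; simp
    exact absurd hsumT ((hmemT i).mp this)
  · obtain ⟨i, k, hik, hT⟩ := Finset.card_eq_two.mp h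
    have hi : a i * s i j ≠ 0 := (hmemT i).mp (by rw [hT]; simp)
    have hk : a k * s k j ≠ 0 := (hmemT k).mp (by rw [hT]; simp)
    rw [hT, Finset.sum_pair hik] at hsumT ⊢
    exact key _ _ _ _ (hs i j) (hs k j) hsumT
end

section
/- There is no 2-level polytope combinatorially equivalent to an n-dimensional double simplex (bipyramid over an (n−1)-simplex) for n ≥ 3. Equivalently: the (n+2)×2n 0/1 matrix M with first row (0,...,0,1,...,1), last row (1,...,1,0,...,0), and middle block (I_n | I_n) is not the slack matrix of any n-dimensional polytope when n ≥ 3. -/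
/-- The `(n+2) × 2n` 0/1 support matrix of the n-dimensional double simplex: first row
`(0,…,0,1,…,1)`, last row `(1,…,1,0,…,0)`, middle block `(Iₙ | Iₙ)`. -/
def doubleSimplexMatrix (n : ℕ) : Matrix (Fin (n+2)) (Fin (2*n)) ℝ := fun i j =>
  if i.val = 0 then (if j.val < n then 0 else 1)
  else if i.val = n + 1 then (if j.val < n then 1 else 0)
  else (if j.val = i.val - 1 ∨ j.val = n + i.val - 1 then 1 else 0)

/-- The left-kernel sign vector `(1, -1, …, -1, 1)`. -/
def dsz (n : ℕ) : Fin (n+2) → ℝ := fun i =>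
  if i.val = 0 ∨ i.val = n + 1 then 1 else -1

lemma dsz_sum (n : ℕ) : ∑ i, dsz n i = 2 - n := by
  have h : ∀ i : Fin (n+2), dsz n i =
      (if i = (⟨0, by omega⟩ : Fin (n+2)) then (2:ℝ) else 0) +
      (if i = (⟨n+1, by omega⟩ : Fin (n+2)) then (2:ℝ) else 0) + (-1) := by
    intro i
    simp only [dsz, Fin.ext_iff]
    split_ifs <;> first | omega | norm_num
  rw [Finset.sum_congr rfl (fun i _ => h i)]
  rw [Finset.sum_add_distrib, Finset.sum_add_distrib, Finset.sum_ite_eq',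
    Finset.sum_ite_eq', Finset.sum_const]
  simp [Fintype.card_fin]
  norm_num
  ring

lemma dsz_col (n : ℕ) (hn : 3 ≤ n) (j : Fin (2*n)) :
    ∑ i, dsz n i * doubleSimplexMatrix n i j = 0 := by
  have hj : j.val < 2 * n := j.isLt
  have h : ∀ i : Fin (n+2), dsz n i * doubleSimplexMatrix n i j =
      (if i = (⟨0, by omega⟩ : Fin (n+2)) then (if j.val < n then (0:ℝ) else 1) else 0) +
      (if i = (⟨n+1, by omega⟩ : Fin (n+2)) then (if j.val < n then (1:ℝ) else 0) else 0) +
      (if i = (⟨(if j.val < n then j.val else j.val - n) + 1, by split_ifs <;> omega⟩ :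
          Fin (n+2)) then (-1:ℝ) else 0) := by
    intro i
    have hi : i.val < n + 2 := i.isLt
    simp only [dsz, doubleSimplexMatrix, Fin.ext_iff]
    split_ifs <;> first | omega | norm_num
  rw [Finset.sum_congr rfl (fun i _ => h i)]
  rw [Finset.sum_add_distrib, Finset.sum_add_distrib, Finset.sum_ite_eq',
    Finset.sum_ite_eq', Finset.sum_ite_eq']
  simp only [Finset.mem_univ, if_true]
  split_ifs <;> ring

lemma dot_sum_smul {n m : ℕ} (a : Fin n → ℝ) (z : Fin m → ℝ) (p : Fin m → Fin n → ℝ) :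
    dotProduct a (∑ i, z i • p i) = ∑ i, z i * dotProduct a (p i) := by
  simp only [dotProduct, Finset.sum_apply, Pi.smul_apply, smul_eq_mul,
    Finset.mul_sum]
  rw [Finset.sum_comm]
  apply Finset.sum_congr rfl
  intro i _
  apply Finset.sum_congr rfl
  intro k _
  ring

/-- for `n ≥ 3`, the matrix `doubleSimplexMatrix n` is not the slack matrix
of any `n`-dimensional polytope; i.e. no 2-level polytope is combinatorially equivalent
to the `n`-dimensional double simplex. -/
theorem stmt14 (n : ℕ) (hn : 3 ≤ n) :
    ¬ ∃ (p : Fin (n+2) → (Fin n → ℝ)) (a : Fin (2*n) → (Fin n → ℝ)) (β : Fin (2*n) → ℝ)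
      (P : Set (Fin n → ℝ)),
      P = {x | ∀ j, dotProduct (a j) x ≤ β j} ∧
      P = convexHull ℝ (Set.range p) ∧
      Set.range p = Set.extremePoints ℝ P ∧
      Bornology.IsBounded P ∧
      (interior P).Nonempty ∧
      (∀ i j, doubleSimplexMatrix n i j = β j - dotProduct (a j) (p i)) := by
  rintro ⟨p, a, β, P, hP, -, hrange, hbdd, -, hM⟩
  set q : Fin n → ℝ := ∑ i, dsz n i • p i with hq
  have hkey : ∀ j, dotProduct (a j) q = (2 - n) * β j := by
    intro j
    have h1 : ∑ i, dsz n i * (β j - dotProduct (a j) (p i)) = 0 := by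
      rw [← dsz_col n hn j]
      exact Finset.sum_congr rfl (fun i _ => by rw [hM i j])
    have h2 : ∑ i, dsz n i * (β j - dotProduct (a j) (p i)) =
        (∑ i, dsz n i) * β j - dotProduct (a j) q := by
      rw [hq, dot_sum_smul, Finset.sum_mul, ← Finset.sum_sub_distrib]
      exact Finset.sum_congr rfl (fun i _ => by ring)
    rw [h2, dsz_sum] at h1
    linarith
  have hc : (2 - (n:ℝ)) ≠ 0 := by
    have : (3:ℝ) ≤ n := by exact_mod_cast hn
    linarith
  obtain ⟨w, hwdef⟩ : ∃ w : Fin n → ℝ, w = (2 - (n:ℝ))⁻¹ • q := ⟨_, rfl⟩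
  have hw : ∀ j, dotProduct (a j) w = β j := by
    intro j
    rw [hwdef, dotProduct_smul, hkey, smul_eq_mul, inv_mul_cancel_left₀ hc]
  have hwP : w ∈ P := by
    rw [hP]; exact fun j => (hw j).le
  have hwext : w ∈ Set.extremePoints ℝ P := by
    refine ⟨hwP, ?_⟩
    intro x1 hx1 x2 hx2 hseg
    obtain ⟨t1, t2, ht1, ht2, hts, hsum⟩ := hseg
    have heq : ∀ j, dotProduct (a j) x1 = β j ∧ dotProduct (a j) x2 = β j := by
      intro j
      have h1 : dotProduct (a j) x1 ≤ β j := by rw [hP] at hx1; exact hx1 j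
      have h2 : dotProduct (a j) x2 ≤ β j := by rw [hP] at hx2; exact hx2 j
      have h3 : t1 * dotProduct (a j) x1 + t2 * dotProduct (a j) x2 = β j := by
        rw [← hw j, ← hsum, dotProduct_add, dotProduct_smul,
          dotProduct_smul, smul_eq_mul, smul_eq_mul]
      have hb : t1 * β j + t2 * β j = β j := by rw [← add_mul, hts, one_mul]
      constructor
      · by_contra h
        have hlt : dotProduct (a j) x1 < β j := lt_of_le_of_ne h1 h
        have e1 := mul_lt_mul_of_pos_left hlt ht1
        have e2 := mul_le_mul_of_nonneg_left h2 ht2.le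
        linarith
      · by_contra h
        have hlt : dotProduct (a j) x2 < β j := lt_of_le_of_ne h2 h
        have e1 := mul_lt_mul_of_pos_left hlt ht2
        have e2 := mul_le_mul_of_nonneg_left h1 ht1.le
        linarith
    have hx12 : x1 = x2 := by
      by_contra hne
      have hd0 : x1 - x2 ≠ 0 := sub_ne_zero.mpr hne
      have hdn : 0 < ‖x1 - x2‖ := norm_pos_iff.mpr hd0
      have hdj : ∀ j, dotProduct (a j) (x1 - x2) = 0 := by
        intro j
        rw [dotProduct_sub, (heq j).1, (heq j).2, sub_self]
      have hline : ∀ t : ℝ, w + t • (x1 - x2) ∈ P := by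
        intro t
        rw [hP]
        intro j
        have h5 : dotProduct (a j) (w + t • (x1 - x2)) = β j := by
          rw [dotProduct_add, hw j, dotProduct_smul, hdj j, smul_zero, add_zero]
        exact h5.le
      obtain ⟨C, hC⟩ := isBounded_iff_forall_norm_le.mp hbdd
      have hCw : 0 ≤ ‖w‖ := norm_nonneg _
      have hC0 : 0 ≤ C := le_trans (norm_nonneg w) (hC w hwP)
      set t := (C + ‖w‖ + 1) / ‖x1 - x2‖ with ht
      have htpos : 0 < t := div_pos (by linarith) hdn
      have hxP := hC _ (hline t)
      have h1 : ‖t • (x1 - x2)‖ = C + ‖w‖ + 1 := by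
        rw [norm_smul, Real.norm_eq_abs, abs_of_pos htpos, ht,
          div_mul_cancel₀ _ (ne_of_gt hdn)]
      have h2 : ‖t • (x1 - x2)‖ ≤ ‖w + t • (x1 - x2)‖ + ‖w‖ := by
        have h3 := norm_sub_le (w + t • (x1 - x2)) w
        simpa using h3
      linarith
    subst hx12
    have hwx : w = x1 := by
      rw [← hsum, ← add_smul, hts, one_smul]
    exact hwx.symm
  have hmem : w ∈ Set.range p := by rw [hrange]; exact hwext
  obtain ⟨i, hi⟩ := hmem
  have hrow : ∀ j, doubleSimplexMatrix n i j = 0 := by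
    intro j
    rw [hM i j, hi, hw j, sub_self]
  have hi2 : i.val < n + 2 := i.isLt
  by_cases h0 : i.val = 0
  · have hb := hrow ⟨n, by omega⟩
    simp [doubleSimplexMatrix, h0] at hb
  · by_cases h1 : i.val = n + 1
    · have hb := hrow ⟨0, by omega⟩
      simp [doubleSimplexMatrix, h0, h1, (by omega : 0 < n)] at hb
    · have hb := hrow ⟨i.val - 1, by omega⟩
      simp [doubleSimplexMatrix, h0, h1] at hb
end
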